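/- Let n ≥ k+2 and k ≥ 2, and let X be a set of vertices of the Johnson graph J(n,k) such that the k-uniform hypergraph of k-sets corresponding to X contains no copy of the k-uniform suspension of C₄. Then X is a total mutual-visibility set in J(n,k). Consequently μₜ(J(n,k)) equals the Turán number ex_k(n, C₄^{k+}). -/

import Mathlib

/-- Two vertices `u` and `v` are `X`-visible if some shortest `u,v`-path has
no internal vertex in `X`. -/
def XVisible {V : Type*} (G : SimpleGraph V) (X : Set V) (u v : V) : Prop :=
  ∃ p : G.Walk u v, p.length = G.dist u v ∧
    ∀ w ∈ p.support, w ∈ X → w = u ∨ w = v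

/-- `X` is a total mutual-visibility set if every pair of vertices is `X`-visible. -/
def IsTotalMVSet {V : Type*} (G : SimpleGraph V) (X : Set V) : Prop :=
  ∀ u v : V, XVisible G X u v

/-- `X` is a mutual-visibility set if every pair of vertices of `X` is `X`-visible. -/
def IsMVSet {V : Type*} (G : SimpleGraph V) (X : Set V) : Prop :=
  ∀ u ∈ X, ∀ v ∈ X, XVisible G X u v

/-- The total mutual-visibility number of a graph. -/
noncomputable def totalMVNumber {V : Type*} [Fintype V] (G : SimpleGraph V) : ℕ :=
  sSup {m | ∃ X : Finset V, IsTotalMVSet G ↑X ∧ X.card = m}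

/-- The mutual-visibility number of a graph. -/
noncomputable def mvNumber {V : Type*} [Fintype V] (G : SimpleGraph V) : ℕ :=
  sSup {m | ∃ X : Finset V, IsMVSet G ↑X ∧ X.card = m}

/-- The Johnson graph `J(n,k)`: vertices are the `k`-subsets of `[n]`,
adjacent iff their intersection has `k - 1` elements. -/
def JohnsonGraph (n k : ℕ) : SimpleGraph {A : Finset (Fin n) // A.card = k} where
  Adj A B := A ≠ B ∧ (A.1 ∩ B.1).card = k - 1
  symm := ⟨fun A B h => ⟨h.1.symm, by rw [Finset.inter_comm]; exact h.2⟩⟩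
  loopless := ⟨fun A h => h.1 rfl⟩

/-- A hypergraph `E` contains a copy of the `k`-uniform suspension of the
4-cycle `C₄`. -/
def HasC4Susp {α : Type*} [DecidableEq α] (k : ℕ) (E : Finset (Finset α)) : Prop :=
  ∃ (Y : Finset α) (z₁ z₂ z₃ z₄ : α),
    Y.card = k - 2 ∧
    z₁ ≠ z₂ ∧ z₁ ≠ z₃ ∧ z₁ ≠ z₄ ∧ z₂ ≠ z₃ ∧ z₂ ≠ z₄ ∧ z₃ ≠ z₄ ∧
    z₁ ∉ Y ∧ z₂ ∉ Y ∧ z₃ ∉ Y ∧ z₄ ∉ Y ∧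
    insert z₁ (insert z₂ Y) ∈ E ∧ insert z₂ (insert z₃ Y) ∈ E ∧
    insert z₃ (insert z₄ Y) ∈ E ∧ insert z₄ (insert z₁ Y) ∈ E

/-- The Turán number `ex_k(n, C₄^{k+})`: the maximum number of edges of a
`k`-uniform hypergraph on `n` vertices with no copy of the `k`-uniform
suspension of `C₄`. -/
noncomputable def exC4Susp (n k : ℕ) : ℕ :=
  sSup {m | ∃ E : Finset (Finset (Fin n)),
    (∀ e ∈ E, e.card = k) ∧ ¬ HasC4Susp k E ∧ E.card = m}

section Aux

variable {n k : ℕ}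

/-- Abbreviation for the vertex type of the Johnson graph. -/
abbrev JVert (n k : ℕ) := {A : Finset (Fin n) // A.card = k}

/-- The vertex obtained from `A` by swapping `a ∈ A` for `b ∉ A`. -/
def swapVert (A : JVert n k) {a b : Fin n} (ha : a ∈ A.1) (hb : b ∉ A.1) : JVert n k :=
  ⟨insert b (A.1.erase a), by
    have hk1 : 0 < k := A.2 ▸ Finset.card_pos.2 ⟨a, ha⟩
    rw [Finset.card_insert_of_notMem (fun h => hb (Finset.mem_of_mem_erase h)),
      Finset.card_erase_of_mem ha, A.2]
    omega⟩

lemma swapVert_adj (A : JVert n k) {a b : Fin n} (ha : a ∈ A.1) (hb : b ∉ A.1) :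
    (JohnsonGraph n k).Adj A (swapVert A ha hb) := by
  refine And.intro ?_ ?_
  · intro h
    have : a ∈ (swapVert A ha hb).1 := h ▸ ha
    simp only [swapVert, Finset.mem_insert, Finset.mem_erase] at this
    rcases this with h1 | h1
    · exact hb (h1 ▸ ha)
    · exact h1.1 rfl
  · have : A.1 ∩ (swapVert A ha hb).1 = A.1.erase a := by
      ext x
      simp only [swapVert, Finset.mem_inter, Finset.mem_insert, Finset.mem_erase]
      constructor
      · rintro ⟨hxA, hx | hx⟩
        · exact absurd (hx ▸ hxA) hb
        · exact ⟨hx.1, hxA⟩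
      · rintro ⟨hxa, hxA⟩
        exact ⟨hxA, Or.inr ⟨hxa, hxA⟩⟩
    rw [this, Finset.card_erase_of_mem ha, A.2]

lemma swapVert_sdiff (A B : JVert n k) {a b : Fin n} (ha : a ∈ A.1 \ B.1)
    (hb : b ∈ B.1 \ A.1) :
    (swapVert A (Finset.mem_sdiff.1 ha).1 (Finset.mem_sdiff.1 hb).2).1 \ B.1
      = (A.1 \ B.1).erase a := by
  rcases Finset.mem_sdiff.1 ha with ⟨haA, haB⟩
  rcases Finset.mem_sdiff.1 hb with ⟨hbB, hbA⟩
  ext x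
  simp only [swapVert, Finset.mem_sdiff, Finset.mem_insert, Finset.mem_erase]
  constructor
  · rintro ⟨hx | hx, hxB⟩
    · exact absurd (hx ▸ hbB) hxB
    · exact ⟨hx.1, hx.2, hxB⟩
  · rintro ⟨hxa, hxA, hxB⟩
    exact ⟨Or.inr ⟨hxa, hxA⟩, hxB⟩

/-- Lower bound: a walk from `A` to `B` has length at least `|A \ B|`. -/
lemma card_sdiff_le_walk_length {A B : JVert n k} (p : (JohnsonGraph n k).Walk A B) :
    (A.1 \ B.1).card ≤ p.length := by
  induction p with
  | nil => simp
  | @cons u C B h p ih =>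
    have huC : (u.1 \ C.1).card = 1 := by
      have h1 := Finset.card_sdiff_add_card_inter u.1 C.1
      have hk1 : 0 < k := by
        by_contra hc
        have : u.1 = C.1 := by
          have : u.1.card = 0 := by omega
          have : u.1 = ∅ := Finset.card_eq_zero.1 (by rw [u.2]; omega)
          have hC : C.1 = ∅ := Finset.card_eq_zero.1 (by rw [C.2]; omega)
          rw [this, hC]
        exact (And.left h) (Subtype.ext this)
      have h2 := And.right h
      have h3 : (u.1 ∩ C.1).card = k - 1 := h2
      rw [u.2, h3] at h1
      omega
    have hsub : u.1 \ B.1 ⊆ (u.1 \ C.1) ∪ (C.1 \ B.1) := by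
      intro x hx
      rcases Finset.mem_sdiff.1 hx with ⟨hxu, hxB⟩
      by_cases hxC : x ∈ C.1
      · exact Finset.mem_union_right _ (Finset.mem_sdiff.2 ⟨hxC, hxB⟩)
      · exact Finset.mem_union_left _ (Finset.mem_sdiff.2 ⟨hxu, hxC⟩)
    calc (u.1 \ B.1).card ≤ ((u.1 \ C.1) ∪ (C.1 \ B.1)).card := Finset.card_le_card hsub
      _ ≤ (u.1 \ C.1).card + (C.1 \ B.1).card := Finset.card_union_le _ _
      _ ≤ 1 + p.length := by rw [huC]; exact Nat.add_le_add_left ih 1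
      _ = p.length + 1 := Nat.add_comm _ _

/-- Main construction: if `X` has no `C₄`-suspension then between any two
vertices there is a geodesic internally avoiding `X`. -/
lemma main_walk (X : Finset (JVert n k))
    (hX : ¬ HasC4Susp k (X.image fun v => v.1)) :
    ∀ (d : ℕ) (A B : JVert n k), (A.1 \ B.1).card = d →
    ∃ p : (JohnsonGraph n k).Walk A B, p.length = d ∧
      ∀ w ∈ p.support, w ∈ X → w = A ∨ w = B := by
  intro d
  induction d with
  | zero =>
    intro A B h
    have : A = B := by
      apply Subtype.ext
      apply Finset.eq_of_subset_of_card_le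
      · intro x hx
        by_contra hc
        have : x ∈ A.1 \ B.1 := Finset.mem_sdiff.2 ⟨hx, hc⟩
        rw [Finset.card_eq_zero.1 h] at this
        exact absurd this (Finset.notMem_empty x)
      · rw [A.2, B.2]
    subst this
    exact ⟨SimpleGraph.Walk.nil, rfl, by simp⟩
  | succ d ih =>
    intro A B h
    have hBA : (B.1 \ A.1).card = d + 1 := by
      rw [Finset.card_sdiff_comm (by rw [A.2, B.2])]; exact h
    obtain ⟨a1, ha1⟩ := Finset.card_pos.1 (h ▸ Nat.succ_pos d : 0 < (A.1 \ B.1).card)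
    obtain ⟨b1, hb1⟩ := Finset.card_pos.1 (hBA ▸ Nat.succ_pos d : 0 < (B.1 \ A.1).card)
    rcases Nat.eq_zero_or_pos d with hd | hd
    · -- distance 1: A and B are adjacent
      subst hd
      have hAB : (JohnsonGraph n k).Adj A B := by
        refine And.intro ?_ ?_
        · intro hEq
          rw [hEq] at ha1
          rcases Finset.mem_sdiff.1 ha1 with ⟨h1, h2⟩
          exact h2 h1
        · have h1 := Finset.card_sdiff_add_card_inter A.1 B.1
          rw [h, A.2] at h1
          omega
      refine ⟨SimpleGraph.Walk.cons hAB SimpleGraph.Walk.nil, rfl, ?_⟩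
      intro w hw _
      simp only [SimpleGraph.Walk.support_cons, SimpleGraph.Walk.support_nil,
        List.mem_cons, List.mem_singleton] at hw
      rcases hw with hw | hw | hw
      · exact Or.inl hw
      · exact Or.inr hw
      · exact absurd hw (by simp)
    · -- distance ≥ 2
      obtain ⟨a2, ha2⟩ : ∃ a2, a2 ∈ (A.1 \ B.1).erase a1 := by
        apply Finset.card_pos.1
        rw [Finset.card_erase_of_mem ha1, h]; omega
      obtain ⟨b2, hb2⟩ : ∃ b2, b2 ∈ (B.1 \ A.1).erase b1 := by
        apply Finset.card_pos.1
        rw [Finset.card_erase_of_mem hb1, hBA]; omega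
      have ha2' : a2 ∈ A.1 \ B.1 := Finset.mem_of_mem_erase ha2
      have hb2' : b2 ∈ B.1 \ A.1 := Finset.mem_of_mem_erase hb2
      have ha12 : a1 ≠ a2 := fun hEq => (Finset.mem_erase.1 ha2).1 hEq.symm
      have hb12 : b1 ≠ b2 := fun hEq => (Finset.mem_erase.1 hb2).1 hEq.symm
      -- find a swap vertex not in X
      have key : ∃ (a b : Fin n) (ha : a ∈ A.1 \ B.1) (hb : b ∈ B.1 \ A.1),
          swapVert A (Finset.mem_sdiff.1 ha).1 (Finset.mem_sdiff.1 hb).2 ∉ X := by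
        by_contra hc
        push_neg at hc
        have ha1A := (Finset.mem_sdiff.1 ha1).1
        have ha2A := (Finset.mem_sdiff.1 ha2').1
        apply hX
        refine ⟨(A.1.erase a1).erase a2, a1, b1, a2, b2, ?_, ?_, ha12, ?_, ?_, ?_, ?_,
          ?_, ?_, ?_, ?_, ?_, ?_, ?_, ?_⟩
        · rw [Finset.card_erase_of_mem (Finset.mem_erase.2
            ⟨(Finset.mem_erase.1 ha2).1, (Finset.mem_sdiff.1 ha2').1⟩),
            Finset.card_erase_of_mem (Finset.mem_sdiff.1 ha1).1, A.2]
          omega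
        · exact fun hEq => (Finset.mem_sdiff.1 hb1).2 (hEq ▸ (Finset.mem_sdiff.1 ha1).1)
        · exact fun hEq => (Finset.mem_sdiff.1 hb2').2 (hEq ▸ (Finset.mem_sdiff.1 ha1).1)
        · exact fun hEq => (Finset.mem_sdiff.1 hb1).2 (hEq.symm ▸ (Finset.mem_sdiff.1 ha2').1)
        · exact hb12
        · exact fun hEq => (Finset.mem_sdiff.1 hb2').2 (hEq ▸ (Finset.mem_sdiff.1 ha2').1)
        · exact fun hEq => (Finset.mem_erase.1 (Finset.mem_erase.1 hEq).2).1 rfl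
        · exact fun hEq => (Finset.mem_sdiff.1 hb1).2
            (Finset.mem_of_mem_erase (Finset.mem_of_mem_erase hEq))
        · exact fun hEq => (Finset.mem_erase.1 hEq).1 rfl
        · exact fun hEq => (Finset.mem_sdiff.1 hb2').2
            (Finset.mem_of_mem_erase (Finset.mem_of_mem_erase hEq))
        · -- insert a1 (insert b1 Y) = swapVert A a2 b1
          have := hc a2 b1 ha2' hb1
          refine Finset.mem_image.2 ⟨_, this, ?_⟩
          show insert b1 (A.1.erase a2) = insert a1 (insert b1 ((A.1.erase a1).erase a2))
          clear hc this hX ih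
          ext x
          simp only [Finset.mem_insert, Finset.mem_erase]
          by_cases hx1 : x = a1 <;> by_cases hx2 : x = a2 <;> simp_all <;> tauto
        · -- insert b1 (insert a2 Y) = swapVert A a1 b1
          have := hc a1 b1 ha1 hb1
          refine Finset.mem_image.2 ⟨_, this, ?_⟩
          show insert b1 (A.1.erase a1) = insert b1 (insert a2 ((A.1.erase a1).erase a2))
          clear hc this hX ih
          ext x
          simp only [Finset.mem_insert, Finset.mem_erase]
          by_cases hx1 : x = a1 <;> by_cases hx2 : x = a2 <;> simp_all <;> tauto
        · -- insert a2 (insert b2 Y) = swapVert A a1 b2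
          have := hc a1 b2 ha1 hb2'
          refine Finset.mem_image.2 ⟨_, this, ?_⟩
          show insert b2 (A.1.erase a1) = insert a2 (insert b2 ((A.1.erase a1).erase a2))
          clear hc this hX ih
          ext x
          simp only [Finset.mem_insert, Finset.mem_erase]
          by_cases hx1 : x = a1 <;> by_cases hx2 : x = a2 <;> simp_all <;> tauto
        · -- insert b2 (insert a1 Y) = swapVert A a2 b2
          have := hc a2 b2 ha2' hb2'
          refine Finset.mem_image.2 ⟨_, this, ?_⟩
          show insert b2 (A.1.erase a2) = insert b2 (insert a1 ((A.1.erase a1).erase a2))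
          clear hc this hX ih
          ext x
          simp only [Finset.mem_insert, Finset.mem_erase]
          by_cases hx1 : x = a1 <;> by_cases hx2 : x = a2 <;> simp_all <;> tauto
      obtain ⟨a, b, ha, hb, hCX⟩ := key
      set C := swapVert A (Finset.mem_sdiff.1 ha).1 (Finset.mem_sdiff.1 hb).2 with hCdef
      have hCB : (C.1 \ B.1).card = d := by
        rw [swapVert_sdiff A B ha hb, Finset.card_erase_of_mem ha, h]
        omega
      obtain ⟨p, hp, hpav⟩ := ih C B hCB
      refine ⟨SimpleGraph.Walk.cons (swapVert_adj A _ _) p, by simp [hp], ?_⟩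
      intro w hw hwX
      simp only [SimpleGraph.Walk.support_cons, List.mem_cons] at hw
      rcases hw with hw | hw
      · exact Or.inl hw
      · rcases hpav w hw hwX with hw' | hw'
        · exact absurd (hw' ▸ hwX) hCX
        · exact Or.inr hw'

/-- Distance formula in the Johnson graph. -/
lemma johnson_dist (A B : JVert n k) :
    (JohnsonGraph n k).dist A B = (A.1 \ B.1).card := by
  obtain ⟨p, hp, -⟩ := main_walk (n := n) (k := k) ∅ (by
    rintro ⟨Y, z1, z2, z3, z4, -, -, -, -, -, -, -, -, -, -, -, h1, -⟩
    simp at h1) (A.1 \ B.1).card A B rfl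
  refine le_antisymm (hp ▸ SimpleGraph.dist_le p) ?_
  obtain ⟨q, hq⟩ := SimpleGraph.Reachable.exists_walk_length_eq_dist ⟨p⟩
  rw [← hq]
  exact card_sdiff_le_walk_length q

/-- Part 1: a `C₄`-suspension-free set is a total mutual-visibility set. -/
lemma part1 (X : Finset (JVert n k))
    (hX : ¬ HasC4Susp k (X.image fun v => v.1)) :
    IsTotalMVSet (JohnsonGraph n k) ↑X := by
  intro u v
  obtain ⟨p, hp, hpav⟩ := main_walk X hX (u.1 \ v.1).card u v rfl
  exact ⟨p, by rw [hp, johnson_dist], fun w hw hwX => hpav w hw hwX⟩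

/-- Decomposition of a walk of length two. -/
lemma walk_length_two {V : Type*} {G : SimpleGraph V} {a b : V}
    (p : G.Walk a b) (h : p.length = 2) :
    ∃ c, G.Adj a c ∧ G.Adj c b ∧ c ∈ p.support := by
  cases p with
  | nil => simp at h
  | cons h1 p' =>
    cases p' with
    | nil => simp at h
    | cons h2 p'' =>
      cases p'' with
      | nil => exact ⟨_, h1, h2, by simp⟩
      | cons _ _ => simp at h

/-- Characterization of the middle vertex of a geodesic of length 2. -/
lemma middle_vertex (hk : 2 ≤ k) {Y : Finset (Fin n)} {z1 z2 z3 z4 : Fin n}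
    (hY : Y.card = k - 2)
    (h12 : z1 ≠ z2) (h13 : z1 ≠ z3) (h14 : z1 ≠ z4) (h23 : z2 ≠ z3) (h24 : z2 ≠ z4)
    (h34 : z3 ≠ z4)
    (hz1 : z1 ∉ Y) (hz2 : z2 ∉ Y) (hz3 : z3 ∉ Y) (hz4 : z4 ∉ Y)
    {u v C : JVert n k} (hu : u.1 = insert z1 (insert z3 Y))
    (hv : v.1 = insert z2 (insert z4 Y))
    (h1 : (JohnsonGraph n k).Adj u C) (h2 : (JohnsonGraph n k).Adj C v) :
    C.1 = insert z1 (insert z2 Y) ∨ C.1 = insert z2 (insert z3 Y) ∨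
    C.1 = insert z3 (insert z4 Y) ∨ C.1 = insert z4 (insert z1 Y) := by
  have hCu1 : (C.1 \ u.1).card = 1 := by
    have h3 := Finset.card_sdiff_add_card_inter C.1 u.1
    have h4 : (u.1 ∩ C.1).card = k - 1 := And.right h1
    rw [Finset.inter_comm] at h4
    rw [h4, C.2] at h3
    omega
  have hCv1 : (C.1 \ v.1).card = 1 := by
    have h3 := Finset.card_sdiff_add_card_inter C.1 v.1
    have h4 : (C.1 ∩ v.1).card = k - 1 := And.right h2
    rw [h4, C.2] at h3
    omega
  obtain ⟨q, hq⟩ := Finset.card_eq_one.1 hCu1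
  obtain ⟨p, hp⟩ := Finset.card_eq_one.1 hCv1
  have huv : u.1 ∩ v.1 = Y := by
    ext x
    rw [Finset.mem_inter, hu, hv]
    simp only [Finset.mem_insert]
    constructor
    · rintro ⟨rfl | rfl | hx, hx2⟩
      · rcases hx2 with h | h | h
        · exact absurd h h12
        · exact absurd h h14
        · exact absurd h hz1
      · rcases hx2 with h | h | h
        · exact absurd h.symm h23
        · exact absurd h h34
        · exact absurd h hz3
      · exact hx
    · intro hx
      exact ⟨Or.inr (Or.inr hx), Or.inr (Or.inr hx)⟩
  have hCYsub : C.1 \ Y ⊆ {q} ∪ {p} := by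
    intro x hx
    rcases Finset.mem_sdiff.1 hx with ⟨hxC, hxY⟩
    by_cases hxu : x ∈ u.1
    · by_cases hxv : x ∈ v.1
      · exact absurd (huv ▸ Finset.mem_inter.2 ⟨hxu, hxv⟩) hxY
      · exact Finset.mem_union_right _ (hp ▸ Finset.mem_sdiff.2 ⟨hxC, hxv⟩)
    · exact Finset.mem_union_left _ (hq ▸ Finset.mem_sdiff.2 ⟨hxC, hxu⟩)
  have hYsubC : Y ⊆ C.1 := by
    have h3 := Finset.card_sdiff_add_card_inter C.1 Y
    have h4 : (C.1 \ Y).card ≤ 2 :=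
      le_trans (Finset.card_le_card hCYsub) (le_trans (Finset.card_union_le _ _) (by simp))
    have h5 : Y.card ≤ (C.1 ∩ Y).card := by rw [hY, C.2] at *; omega
    intro y hy
    have : C.1 ∩ Y = Y := Finset.eq_of_subset_of_card_le Finset.inter_subset_right h5
    exact Finset.mem_of_mem_inter_left (this.symm ▸ hy)
  have hpC : p ∈ C.1 := (Finset.mem_sdiff.1 (hp ▸ Finset.mem_singleton_self p)).1
  have hpv : p ∉ v.1 := (Finset.mem_sdiff.1 (hp ▸ Finset.mem_singleton_self p)).2
  have hqC : q ∈ C.1 := (Finset.mem_sdiff.1 (hq ▸ Finset.mem_singleton_self q)).1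
  have hqu : q ∉ u.1 := (Finset.mem_sdiff.1 (hq ▸ Finset.mem_singleton_self q)).2
  have hsub : C.1 ⊆ insert p (insert q Y) := by
    intro x hx
    by_cases hxY : x ∈ Y
    · exact Finset.mem_insert.2 (Or.inr (Finset.mem_insert.2 (Or.inr hxY)))
    · rcases Finset.mem_union.1 (hCYsub (Finset.mem_sdiff.2 ⟨hx, hxY⟩)) with h | h
      · exact Finset.mem_insert.2 (Or.inr (Finset.mem_insert.2
          (Or.inl (Finset.mem_singleton.1 h))))
      · exact Finset.mem_insert.2 (Or.inl (Finset.mem_singleton.1 h))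
  have hpq : p ≠ q := by
    rintro rfl
    have h3 : C.1.card ≤ (insert p Y).card := by
      apply Finset.card_le_card
      intro x hx
      rcases Finset.mem_insert.1 (hsub hx) with h | h
      · exact Finset.mem_insert.2 (Or.inl h)
      · exact h
    have h4 := Finset.card_insert_le p Y
    rw [C.2, hY] at *
    omega
  have hCeq : C.1 = insert p (insert q Y) := by
    apply Finset.eq_of_subset_of_card_le hsub
    calc (insert p (insert q Y)).card ≤ (insert q Y).card + 1 := Finset.card_insert_le _ _
      _ ≤ Y.card + 1 + 1 := by have := Finset.card_insert_le q Y; omega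
      _ ≤ C.1.card := by rw [hY, C.2]; omega
  have hpu : p ∈ u.1 := by
    by_contra hc
    exact hpq (Finset.mem_singleton.1 (hq ▸ Finset.mem_sdiff.2 ⟨hpC, hc⟩))
  have hqv : q ∈ v.1 := by
    by_contra hc
    exact hpq (Finset.mem_singleton.1 (hp ▸ Finset.mem_sdiff.2 ⟨hqC, hc⟩)).symm
  have hpz : p = z1 ∨ p = z3 := by
    rw [hu] at hpu
    rcases Finset.mem_insert.1 hpu with h | h
    · exact Or.inl h
    · rcases Finset.mem_insert.1 h with h | h
      · exact Or.inr h
      · exact absurd (hv ▸ Finset.mem_insert.2 (Or.inr (Finset.mem_insert.2 (Or.inr h)))) hpv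
  have hqz : q = z2 ∨ q = z4 := by
    rw [hv] at hqv
    rcases Finset.mem_insert.1 hqv with h | h
    · exact Or.inl h
    · rcases Finset.mem_insert.1 h with h | h
      · exact Or.inr h
      · exact absurd (hu ▸ Finset.mem_insert.2 (Or.inr (Finset.mem_insert.2 (Or.inr h)))) hqu
  rcases hpz with rfl | rfl <;> rcases hqz with rfl | rfl
  · exact Or.inl hCeq
  · exact Or.inr (Or.inr (Or.inr (hCeq.trans (Finset.insert_comm _ _ _))))
  · exact Or.inr (Or.inl (hCeq.trans (Finset.insert_comm _ _ _)))
  · exact Or.inr (Or.inr (Or.inl hCeq))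

/-- Part 2a: a total mutual-visibility set has no `C₄`-suspension. -/
lemma free_of_tmv (hk : 2 ≤ k) (X : Finset (JVert n k))
    (hX : IsTotalMVSet (JohnsonGraph n k) ↑X) :
    ¬ HasC4Susp k (X.image fun v => v.1) := by
  rintro ⟨Y, z1, z2, z3, z4, hY, h12, h13, h14, h23, h24, h34,
    hz1, hz2, hz3, hz4, e1, e2, e3, e4⟩
  have hcard : ∀ za zb : Fin n, za ≠ zb → za ∉ Y → zb ∉ Y →
      (insert za (insert zb Y)).card = k := by
    intro za zb hab ha hb
    rw [Finset.card_insert_of_notMem (by simp [hab, ha]),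
      Finset.card_insert_of_notMem hb, hY]
    omega
  set u : JVert n k := ⟨insert z1 (insert z3 Y), hcard z1 z3 h13 hz1 hz3⟩ with hudef
  set v : JVert n k := ⟨insert z2 (insert z4 Y), hcard z2 z4 h24 hz2 hz4⟩ with hvdef
  have hdist : (JohnsonGraph n k).dist u v = 2 := by
    rw [johnson_dist]
    have : u.1 \ v.1 = {z1, z3} := by
      ext x
      simp only [hudef, hvdef, Finset.mem_sdiff, Finset.mem_insert, Finset.mem_singleton]
      constructor
      · rintro ⟨rfl | rfl | hx, hx2⟩
        · exact Or.inl rfl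
        · exact Or.inr rfl
        · exact absurd (Or.inr (Or.inr hx)) hx2
      · rintro (rfl | rfl)
        · refine ⟨Or.inl rfl, ?_⟩
          rintro (h | h | h)
          · exact h12 h
          · exact h14 h
          · exact hz1 h
        · refine ⟨Or.inr (Or.inl rfl), ?_⟩
          rintro (h | h | h)
          · exact h23 h.symm
          · exact h34 h
          · exact hz3 h
    rw [this, Finset.card_insert_of_notMem (by simp [h13]), Finset.card_singleton]
  obtain ⟨p, hlen, hav⟩ := hX u v
  rw [hdist] at hlen
  obtain ⟨C, h1, h2, hCsupp⟩ := walk_length_two p hlen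
  · have hC4 := middle_vertex hk hY h12 h13 h14 h23 h24 h34 hz1 hz2 hz3 hz4
      rfl rfl h1 h2
    have hmemX : C ∈ X := by
      have hCE : C.1 ∈ X.image (fun v => v.1) := by
        rcases hC4 with h | h | h | h <;> rw [h] <;> assumption
      obtain ⟨w, hwX, hw⟩ := Finset.mem_image.1 hCE
      exact (Subtype.ext hw : w = C) ▸ hwX
    rcases hav C hCsupp hmemX with hCu | hCv
    · -- C = u impossible: z2 or z4 ∈ C but not in u
      have : z2 ∈ C.1 ∨ z4 ∈ C.1 := by
        rcases hC4 with h | h | h | h <;> rw [h] <;> simp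
      have hnu : z2 ∉ u.1 ∧ z4 ∉ u.1 := by
        constructor <;> rw [hudef] <;> simp only [Finset.mem_insert] <;>
          rintro (h | h | h)
        · exact h12 h.symm
        · exact h23 h
        · exact hz2 h
        · exact h14 h.symm
        · exact h34 h.symm
        · exact hz4 h
      rw [hCu] at this
      rcases this with h | h
      · exact hnu.1 h
      · exact hnu.2 h
    · -- C = v impossible: z1 or z3 ∈ C but not in v
      have : z1 ∈ C.1 ∨ z3 ∈ C.1 := by
        rcases hC4 with h | h | h | h <;> rw [h] <;> simp
      have hnv : z1 ∉ v.1 ∧ z3 ∉ v.1 := by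
        constructor <;> rw [hvdef] <;> simp only [Finset.mem_insert] <;>
          rintro (h | h | h)
        · exact h12 h
        · exact h14 h
        · exact hz1 h
        · exact h23 h.symm
        · exact h34 h
        · exact hz3 h
      rw [hCv] at this
      rcases this with h | h
      · exact hnv.1 h
      · exact hnv.2 h


end Aux

/-- If the hypergraph of `k`-sets corresponding to `X` contains no copy of the
`k`-uniform suspension of `C₄`, then `X` is a total mutual-visibility set of
`J(n,k)`; consequently the total mutual-visibility number of `J(n,k)` equals
the Turán number `ex_k(n, C₄^{k+})`. -/
theorem johnson_totalMVNumber (n k : ℕ) (hk : 2 ≤ k) (hn : k + 2 ≤ n) :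
    (∀ X : Finset {A : Finset (Fin n) // A.card = k},
      ¬ HasC4Susp k (X.image fun v => v.1) →
        IsTotalMVSet (JohnsonGraph n k) ↑X) ∧
    totalMVNumber (JohnsonGraph n k) = exC4Susp n k := by
  refine ⟨fun X hX => part1 X hX, ?_⟩
  have hset : {m | ∃ X : Finset (JVert n k),
        IsTotalMVSet (JohnsonGraph n k) ↑X ∧ X.card = m}
      = {m | ∃ E : Finset (Finset (Fin n)),
        (∀ e ∈ E, e.card = k) ∧ ¬ HasC4Susp k E ∧ E.card = m} := by
    ext m
    constructor
    · rintro ⟨X, hX, rfl⟩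
      refine ⟨X.image fun v => v.1, ?_, free_of_tmv hk X hX, ?_⟩
      · intro e he
        obtain ⟨w, -, rfl⟩ := Finset.mem_image.1 he
        exact w.2
      · exact Finset.card_image_of_injective X Subtype.val_injective
    · rintro ⟨E, hunif, hfree, rfl⟩
      refine ⟨E.subtype (fun A => A.card = k), ?_, ?_⟩
      · apply part1
        have himg : ((E.subtype (fun A => A.card = k)).image fun v => v.1) = E := by
          ext e
          constructor
          · intro he
            obtain ⟨w, hw, rfl⟩ := Finset.mem_image.1 he
            exact Finset.mem_subtype.1 hw
          · intro he
            exact Finset.mem_image.2 ⟨⟨e, hunif e he⟩, Finset.mem_subtype.2 he, rfl⟩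
        rw [himg]
        exact hfree
      · rw [Finset.card_subtype, Finset.filter_true_of_mem hunif]
  unfold totalMVNumber exC4Susp
  rw [hset]
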